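/- Let λ > 1, let q ≥ max{λ, 1} be a real number, and let m ≥ 0 be an integer. Then ∑_{i=0}^{m−1} (i + q)^{−2} · ∏_{j=i+1}^{m−1} (1 − λ/(j + q)) ≤ (4e/(λ − 1)) · 1/(m + q). -/

import Mathlib

/-- **Elementary product-sum estimate for linearly-diminishing step sizes.** For
`λ > 1`, `q ≥ max{λ, 1}` and any integer `m ≥ 0`,
`∑_{i=0}^{m−1} (i+q)^{−2} ∏_{j=i+1}^{m−1} (1 − λ/(j+q)) ≤ (4e/(λ−1)) · 1/(m+q)`. -/
theorem product_sum_estimate_linear (lam q : ℝ) (hlam : 1 < lam)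
    (hq : max lam 1 ≤ q) (m : ℕ) :
    ∑ i ∈ Finset.range m,
        (1 / ((i : ℝ) + q) ^ 2) * ∏ j ∈ Finset.Ico (i + 1) m, (1 - lam / ((j : ℝ) + q))
      ≤ (4 * Real.exp 1 / (lam - 1)) * (1 / ((m : ℝ) + q)) := by
  have hq1 : (1:ℝ) ≤ q := le_trans (le_max_right _ _) hq
  have hql : lam ≤ q := le_trans (le_max_left _ _) hq
  have he : (2:ℝ) ≤ 4 * Real.exp 1 := by nlinarith [Real.exp_one_gt_d9]
  induction m with
  | zero =>
    simp only [Finset.range_zero, Finset.sum_empty, Nat.cast_zero, zero_add]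
    have h1 : (0:ℝ) < lam - 1 := by linarith
    have h2 : (0:ℝ) < q := by linarith
    positivity
  | succ n ih =>
    have hn0 : (0:ℝ) ≤ (n:ℝ) := Nat.cast_nonneg n
    have hx : (1:ℝ) ≤ (n:ℝ) + q := by linarith
    have hxl : lam ≤ (n:ℝ) + q := by linarith
    have key : ∑ i ∈ Finset.range (n+1),
        (1 / ((i : ℝ) + q) ^ 2) * ∏ j ∈ Finset.Ico (i + 1) (n+1), (1 - lam / ((j : ℝ) + q))
        = (1 - lam/((n:ℝ)+q)) * (∑ i ∈ Finset.range n,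
            (1 / ((i : ℝ) + q) ^ 2) * ∏ j ∈ Finset.Ico (i + 1) n, (1 - lam / ((j : ℝ) + q)))
          + 1/((n:ℝ)+q)^2 := by
      rw [Finset.sum_range_succ, Finset.Ico_self, Finset.prod_empty, Finset.mul_sum]
      rw [mul_one]
      congr 1
      apply Finset.sum_congr rfl
      intro i hi
      have hin : i + 1 ≤ n := Finset.mem_range.mp hi
      rw [Finset.prod_Ico_succ_top hin]
      ring
    rw [key]
    set C : ℝ := 4 * Real.exp 1 / (lam - 1) with hCdef
    have hCl : (lam - 1) * C = 4 * Real.exp 1 := by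
      rw [hCdef, mul_comm, div_mul_eq_mul_div, mul_div_assoc,
        div_self (by linarith : lam - 1 ≠ 0), mul_one]
    have hfac : (0:ℝ) ≤ 1 - lam/((n:ℝ)+q) := by
      rw [sub_nonneg, div_le_one (by linarith)]
      exact hxl
    have hstep : (1 - lam/((n:ℝ)+q)) * (∑ i ∈ Finset.range n,
            (1 / ((i : ℝ) + q) ^ 2) * ∏ j ∈ Finset.Ico (i + 1) n, (1 - lam / ((j : ℝ) + q)))
        ≤ (1 - lam/((n:ℝ)+q)) * (C * (1/((n:ℝ)+q))) :=
      mul_le_mul_of_nonneg_left ih hfac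
    have hxpos : (0:ℝ) < (n:ℝ) + q := by linarith
    have hx1pos : (0:ℝ) < (n:ℝ) + 1 + q := by linarith
    have hgoal : (1 - lam/((n:ℝ)+q)) * (C * (1/((n:ℝ)+q))) + 1/((n:ℝ)+q)^2
        ≤ C * (1/((n:ℝ)+1+q)) := by
      set x : ℝ := (n:ℝ) + q with hxdef
      have hCpos : 0 < C := by
        rw [hCdef]
        apply div_pos (by positivity) (by linarith)
      have key2 : x + 1 ≤ C * ((lam-1)*x + lam) := by
        have h1 : C * ((lam-1)*x) = (4 * Real.exp 1) * x := by
          rw [← hCl]; ring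
        nlinarith [mul_nonneg hCpos.le (by linarith : (0:ℝ) ≤ lam)]
      have expand : (1 - lam/x) * (C * (1/x)) + 1/x^2
          = (C*(x-lam)*(x+1) + (x+1)) / (x^2*(x+1)) := by
        field_simp
      have rhsx : C * (1/((n:ℝ)+1+q)) = (C * x^2)/(x^2*(x+1)) := by
        have : (n:ℝ)+1+q = x + 1 := by rw [hxdef]; ring
        rw [this]
        field_simp
      rw [expand, rhsx, div_le_div_iff₀ (by positivity) (by positivity)]
      nlinarith [mul_pos hxpos hx1pos, sq_nonneg x,
        mul_le_mul_of_nonneg_right key2 (mul_pos (mul_pos hxpos hxpos) (by linarith : (0:ℝ) < x+1)).le]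
    push_cast
    calc _ ≤ (1 - lam/((n:ℝ)+q)) * (C * (1/((n:ℝ)+q))) + 1/((n:ℝ)+q)^2 := by linarith
      _ ≤ C * (1/((n:ℝ)+1+q)) := hgoal
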